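/- arXiv:2408.01624 — 2 statements merged into one kernel-verified Lean document; each statement's English description precedes it below -/
import Mathlib

section
/- Let $s \geq 1$, $\mu \in (0,1)$, $m_0 \in [-1,1]$, and let $h : [0,\infty) \times (\mathbb{R}\setminus\{0\}) \to \mathbb{C}$ be a family of bounded functions, differentiable in $t$, satisfying $\frac{d}{dt} h_t(\xi) + h_t(\xi) = (\cos(\mu\xi) - i m_0 \sin(\mu\xi)) (1-\mu)^s h_t((1-\mu)\xi)$ for all $t \geq 0$ and $\xi \neq 0$, with $t \mapsto \|h_t\|_\infty$ continuous. Then $\|h_t\|_\infty \leq \|h_0\|_\infty e^{-(1 - (1-\mu)^s) t}$ for all $t \geq 0$. -/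
open Real Filter

lemma gronwall_aux (F : ℝ → ℝ) (hF : Continuous F) (C a : ℝ) (ha : 0 ≤ a)
    (hineq : ∀ u, 0 ≤ u → F u ≤ C + a * ∫ τ in (0:ℝ)..u, F τ) :
    ∀ t, 0 ≤ t → F t ≤ C * Real.exp (a * t) := by
  intro t ht
  set G : ℝ → ℝ := fun u => C + a * ∫ τ in (0:ℝ)..u, F τ with hGdef
  have hG : ∀ u : ℝ, HasDerivAt G (a * F u) u := by
    intro u
    have h1 : HasDerivAt (fun u => ∫ τ in (0:ℝ)..u, F τ) (F u) u :=
      intervalIntegral.integral_hasDerivAt_right (hF.intervalIntegrable _ _)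
        (hF.stronglyMeasurableAtFilter _ _) hF.continuousAt
    exact (h1.const_mul a).const_add C
  set ψ : ℝ → ℝ := fun u => Real.exp (-(a*u)) * G u with hψdef
  have hψ : ∀ u : ℝ, HasDerivAt ψ
      (Real.exp (-(a*u)) * (-a) * G u + Real.exp (-(a*u)) * (a * F u)) u := by
    intro u
    have he : HasDerivAt (fun u : ℝ => Real.exp (-(a*u))) (Real.exp (-(a*u)) * (-a)) u := by
      have hl : HasDerivAt (fun u : ℝ => -(a*u)) (-a) u := by
        simpa [neg_mul] using (hasDerivAt_id u).const_mul (-a)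
      exact (Real.hasDerivAt_exp (-(a*u))).comp u hl
    exact (he.mul (hG u)).congr_deriv (by ring)
  have hGcont : Continuous G :=
    continuous_iff_continuousAt.2 fun u => (hG u).continuousAt
  have hanti : AntitoneOn ψ (Set.Ici (0:ℝ)) := by
    apply antitoneOn_of_deriv_nonpos (convex_Ici 0)
    · exact ((Real.continuous_exp.comp (by continuity)).mul hGcont).continuousOn
    · intro x hx
      exact (hψ x).differentiableAt.differentiableWithinAt
    · intro x hx
      rw [interior_Ici] at hx
      rw [(hψ x).deriv]
      have h1 : F x ≤ G x := hineq x hx.le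
      have h2 : (0:ℝ) < Real.exp (-(a*x)) := Real.exp_pos _
      have h3 := mul_le_mul_of_nonneg_left h1 (mul_nonneg h2.le ha)
      nlinarith [h3]
  have hψt : ψ t ≤ ψ 0 := hanti (Set.self_mem_Ici) ht ht
  have hψ0 : ψ 0 = C := by
    simp [hψdef, hGdef, intervalIntegral.integral_same]
  have hFG : F t ≤ G t := hineq t ht
  have h2 : (0:ℝ) < Real.exp (-(a*t)) := Real.exp_pos _
  have h3 : Real.exp (-(a*t)) * Real.exp (a*t) = 1 := by
    rw [← Real.exp_add]; simp
  have h4 : Real.exp (a*t) * (Real.exp (-(a*t)) * G t) = G t := by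
    rw [← mul_assoc, mul_comm (Real.exp (a*t)), h3, one_mul]
  have h5 := mul_le_mul_of_nonneg_left hψt (Real.exp_pos (a*t)).le
  rw [hψ0] at h5
  rw [hψdef] at h5
  simp only at h5
  rw [h4] at h5
  linarith

theorem stmt_5 (s : ℝ) (hs : 1 ≤ s) (μ : ℝ) (hμ : μ ∈ Set.Ioo (0:ℝ) 1)
    (m0 : ℝ) (hm0 : m0 ∈ Set.Icc (-1:ℝ) 1)
    (h : ℝ → ℝ → ℂ) (H : ℝ → ℝ) (hHcont : Continuous H)
    (hH : ∀ t, IsLUB {r | ∃ ξ : ℝ, ξ ≠ 0 ∧ r = ‖h t ξ‖} (H t))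
    (hode : ∀ t, 0 ≤ t → ∀ ξ : ℝ, ξ ≠ 0 →
      HasDerivAt (fun τ => h τ ξ)
        (((Real.cos (μ * ξ) : ℂ) - Complex.I * (m0 : ℂ) * (Real.sin (μ * ξ) : ℂ))
            * (((1 - μ) ^ s : ℝ) : ℂ) * h t ((1 - μ) * ξ) - h t ξ) t) :
    ∀ t, 0 ≤ t → H t ≤ H 0 * Real.exp (-(1 - (1 - μ) ^ s) * t) := by
  obtain ⟨hμ0, hμ1⟩ := hμ
  set a : ℝ := (1 - μ) ^ s with ha_def
  have ha0 : 0 ≤ a := Real.rpow_nonneg (by linarith) s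
  have hcoef : ∀ ξ : ℝ,
      ‖((Real.cos (μ * ξ) : ℂ) - Complex.I * (m0 : ℂ) * (Real.sin (μ * ξ) : ℂ))‖ ≤ 1 := by
    intro ξ
    set z : ℂ := (Real.cos (μ * ξ) : ℂ) - Complex.I * (m0 : ℂ) * (Real.sin (μ * ξ) : ℂ)
    have hre : z.re = Real.cos (μ*ξ) := by simp [z, -Complex.ofReal_cos, -Complex.ofReal_sin]
    have him : z.im = -(m0 * Real.sin (μ*ξ)) := by simp [z, -Complex.ofReal_cos, -Complex.ofReal_sin]
    have hz2 : ‖z‖^2 = Real.cos (μ*ξ)^2 + m0^2 * Real.sin (μ*ξ)^2 := by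
      rw [Complex.sq_norm, Complex.normSq_apply, hre, him]
      ring
    have hpy : Real.sin (μ*ξ)^2 + Real.cos (μ*ξ)^2 = 1 := Real.sin_sq_add_cos_sq _
    have hm : m0^2 ≤ 1 := by nlinarith [hm0.1, hm0.2]
    nlinarith [norm_nonneg z, sq_nonneg (Real.sin (μ*ξ))]
  -- each ‖h u ξ‖ ≤ H u
  have hmem : ∀ u : ℝ, ∀ ξ : ℝ, ξ ≠ 0 → ‖h u ξ‖ ≤ H u := fun u ξ hξ =>
    (hH u).1 ⟨ξ, hξ, rfl⟩
  -- key integral inequality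
  have key : ∀ u, 0 ≤ u → Real.exp u * H u ≤
      H 0 + a * ∫ τ in (0:ℝ)..u, Real.exp τ * H τ := by
    intro u hu
    have hbd : ∀ ξ : ℝ, ξ ≠ 0 → Real.exp u * ‖h u ξ‖ ≤
        H 0 + a * ∫ τ in (0:ℝ)..u, Real.exp τ * H τ := by
      intro ξ hξ
      have hξ' : (1 - μ) * ξ ≠ 0 := mul_ne_zero (by linarith) hξ
      set c : ℂ := ((Real.cos (μ * ξ) : ℂ) - Complex.I * (m0 : ℂ) * (Real.sin (μ * ξ) : ℂ))
      set g : ℝ → ℂ := fun τ => Real.exp τ • h τ ξ with hgdef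
      set g' : ℝ → ℂ := fun τ => Real.exp τ • (c * (a:ℂ) * h τ ((1-μ)*ξ)) with hg'def
      have hg : ∀ τ ∈ Set.uIcc (0:ℝ) u, HasDerivAt g (g' τ) τ := by
        intro τ hτ
        rw [Set.uIcc_of_le hu] at hτ
        have hd := (Real.hasDerivAt_exp τ).smul (hode τ hτ.1 ξ hξ)
        convert hd using 1
        · rfl
        show Real.exp τ • (c * (a:ℂ) * h τ ((1-μ)*ξ)) = _
        rw [smul_sub]
        abel
        rfl
      have hcont : ContinuousOn g' (Set.uIcc 0 u) := by
        rw [Set.uIcc_of_le hu]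
        have : ContinuousOn (fun τ => h τ ((1-μ)*ξ)) (Set.Icc 0 u) := fun τ hτ =>
          ((hode τ hτ.1 _ hξ').continuousAt).continuousWithinAt
        exact (Real.continuous_exp.continuousOn).smul
          ((continuousOn_const.mul this))
      have hint : IntervalIntegrable g' MeasureTheory.volume 0 u :=
        hcont.intervalIntegrable
      have hftc : ∫ τ in (0:ℝ)..u, g' τ = g u - g 0 :=
        intervalIntegral.integral_eq_sub_of_hasDerivAt hg hint
      have hnorm : ‖g u‖ ≤ ‖g 0‖ + ∫ τ in (0:ℝ)..u, a * (Real.exp τ * H τ) := by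
        have h1 : ‖g u - g 0‖ ≤ ∫ τ in (0:ℝ)..u, a * (Real.exp τ * H τ) := by
          rw [← hftc]
          calc ‖∫ τ in (0:ℝ)..u, g' τ‖ ≤ ∫ τ in (0:ℝ)..u, ‖g' τ‖ :=
                intervalIntegral.norm_integral_le_integral_norm hu
            _ ≤ ∫ τ in (0:ℝ)..u, a * (Real.exp τ * H τ) := by
                apply intervalIntegral.integral_mono_on hu hint.norm
                  ((continuous_const.mul (Real.continuous_exp.mul hHcont)).intervalIntegrable 0 u)
                intro τ hτ
                have hτ0 : (0:ℝ) ≤ τ := hτ.1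
                have hnm : ‖c * (a:ℂ) * h τ ((1-μ)*ξ)‖ ≤ a * H τ := by
                  have := hmem τ _ hξ'
                  calc ‖c * (a:ℂ) * h τ ((1-μ)*ξ)‖
                      = ‖c‖ * ‖(a:ℂ)‖ * ‖h τ ((1-μ)*ξ)‖ := by simp [norm_mul]
                    _ ≤ 1 * a * H τ := by
                        apply mul_le_mul _ this (norm_nonneg _) (by positivity)
                        apply mul_le_mul (hcoef ξ) (le_of_eq (by simp [abs_of_nonneg ha0]))
                          (norm_nonneg _) zero_le_one
                    _ = a * H τ := by ring
                calc ‖g' τ‖ = Real.exp τ * ‖c * (a:ℂ) * h τ ((1-μ)*ξ)‖ := by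
                      simp [hg'def, norm_smul, abs_of_nonneg (Real.exp_pos τ).le]
                  _ ≤ Real.exp τ * (a * H τ) := by
                      exact mul_le_mul_of_nonneg_left hnm (Real.exp_pos τ).le
                  _ = a * (Real.exp τ * H τ) := by ring
        calc ‖g u‖ = ‖g 0 + (g u - g 0)‖ := by ring_nf
          _ ≤ ‖g 0‖ + ‖g u - g 0‖ := norm_add_le _ _
          _ ≤ ‖g 0‖ + ∫ τ in (0:ℝ)..u, a * (Real.exp τ * H τ) := by linarith
      have hg0 : ‖g 0‖ ≤ H 0 := by
        simpa [hgdef, norm_smul] using hmem 0 ξ hξ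
      have hgu : ‖g u‖ = Real.exp u * ‖h u ξ‖ := by
        simp [hgdef, norm_smul, abs_of_nonneg (Real.exp_pos u).le]
      rw [intervalIntegral.integral_const_mul] at hnorm
      rw [← hgu]
      linarith
    -- now take LUB
    have hpos : (0:ℝ) < Real.exp u := Real.exp_pos u
    have : H u ≤ (H 0 + a * ∫ τ in (0:ℝ)..u, Real.exp τ * H τ) / Real.exp u := by
      apply (hH u).2
      rintro r ⟨ξ, hξ, rfl⟩
      rw [le_div_iff₀ hpos]
      calc ‖h u ξ‖ * Real.exp u = Real.exp u * ‖h u ξ‖ := by ring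
        _ ≤ _ := hbd ξ hξ
    calc Real.exp u * H u ≤ Real.exp u *
          ((H 0 + a * ∫ τ in (0:ℝ)..u, Real.exp τ * H τ) / Real.exp u) :=
            mul_le_mul_of_nonneg_left this hpos.le
      _ = H 0 + a * ∫ τ in (0:ℝ)..u, Real.exp τ * H τ := by field_simp
  -- apply Gronwall
  have hFcont : Continuous (fun τ => Real.exp τ * H τ) := Real.continuous_exp.mul hHcont
  have hgr := gronwall_aux (fun τ => Real.exp τ * H τ) hFcont (H 0) a ha0 key
  intro t ht
  have h1 := hgr t ht
  have hpos : (0:ℝ) < Real.exp t := Real.exp_pos t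
  have h2 : Real.exp (-(1 - a) * t) * Real.exp t = Real.exp (a * t) := by
    rw [← Real.exp_add]; ring_nf
  rw [← mul_le_mul_iff_of_pos_right hpos]
  calc H t * Real.exp t = Real.exp t * H t := by ring
    _ ≤ H 0 * Real.exp (a * t) := h1
    _ = H 0 * Real.exp (-(1 - a) * t) * Real.exp t := by rw [mul_assoc, h2]
end

section
/- Let $\mu = 1 - 1/\sqrt{2}$ and $r = 4\mu - 1 = 3 - 2\sqrt{2}$. Define the density $\rho_\infty$ on $[-1,1]$ by $\rho_\infty(x) = \frac{1}{1+r}\frac{1+x}{1-r}$ for $-1 \leq x \leq -r$, $\rho_\infty(x) = \frac{1}{1+r}$ for $-r \leq x \leq r$, and $\rho_\infty(x) = \frac{1}{1+r}\frac{1-x}{1-r}$ for $r \leq x \leq 1$. Then $\rho_\infty$ is a probability density, and if $Z$ has density $\rho_\infty$ and $\mathcal{B}$ is an independent symmetric Rademacher variable, then $(1-\mu)Z + \mu\mathcal{B}$ also has density $\rho_\infty$. -/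
open MeasureTheory ProbabilityTheory

/-- The symmetric Rademacher distribution: mass `1/2` at each of `1` and `-1`. -/
noncomputable def symRadMeasure : Measure ℝ :=
  (2:ENNReal)⁻¹ • Measure.dirac 1 + (2:ENNReal)⁻¹ • Measure.dirac (-1)

/-- The parameter `r = 3 - 2√2 = 4μ - 1` for `μ = 1 - 1/√2`. -/
noncomputable def rPar : ℝ := 3 - 2 * Real.sqrt 2

/-- The volcano-shaped density on `[-1,1]` (extended by `0` outside). -/
noncomputable def rhoInf (x : ℝ) : ℝ :=
  if x < -1 ∨ 1 < x then 0
  else if x ≤ -rPar then 1 / (1 + rPar) * ((1 + x) / (1 - rPar))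
  else if x ≤ rPar then 1 / (1 + rPar)
  else 1 / (1 + rPar) * ((1 - x) / (1 - rPar))

lemma sqrt2_sq' : Real.sqrt 2 ^ 2 = 2 := Real.sq_sqrt (by norm_num)
lemma sqrt2_gt' : 1.414 < Real.sqrt 2 := by nlinarith [sqrt2_sq', Real.sqrt_nonneg 2]
lemma sqrt2_lt' : Real.sqrt 2 < 1.415 := by nlinarith [sqrt2_sq', Real.sqrt_nonneg 2]
lemma rPar_pos' : 0 < rPar := by unfold rPar; nlinarith [sqrt2_lt']
lemma rPar_lt' : rPar < 1/5 := by unfold rPar; nlinarith [sqrt2_gt']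

lemma rho_zero' {x : ℝ} (h : x ≤ -1 ∨ 1 ≤ x) : rhoInf x = 0 := by
  have h0 := rPar_pos'; have h1 := rPar_lt'
  unfold rhoInf
  rcases h with h | h
  · rcases lt_or_eq_of_le h with h' | h'
    · rw [if_pos (Or.inl h')]
    · subst h'
      rw [if_neg (by norm_num), if_pos (by linarith)]
      ring
  · rcases lt_or_eq_of_le h with h' | h'
    · rw [if_pos (Or.inr h')]
    · rw [if_neg (by rw [← h']; norm_num), if_neg (by rw [← h']; linarith),
        if_neg (by rw [← h']; linarith), ← h']
      ring

lemma rho_left' {x : ℝ} (h1 : -1 ≤ x) (h2 : x ≤ -rPar) :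
    rhoInf x = 1 / (1 + rPar) * ((1 + x) / (1 - rPar)) := by
  have h0 := rPar_pos'; have hl := rPar_lt'
  unfold rhoInf
  rw [if_neg (by push_neg; constructor <;> linarith), if_pos h2]

lemma rho_mid' {x : ℝ} (h1 : -rPar ≤ x) (h2 : x ≤ rPar) :
    rhoInf x = 1 / (1 + rPar) := by
  have h0 := rPar_pos'; have hl := rPar_lt'
  unfold rhoInf
  rw [if_neg (by push_neg; constructor <;> linarith)]
  rcases le_or_gt x (-rPar) with h | h
  · have hx : x = -rPar := le_antisymm h h1
    rw [if_pos h, hx]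
    have : (0:ℝ) < 1 - rPar := by linarith
    field_simp
    ring
  · rw [if_neg (not_le.mpr h), if_pos h2]

lemma rho_right' {x : ℝ} (h1 : rPar ≤ x) (h2 : x ≤ 1) :
    rhoInf x = 1 / (1 + rPar) * ((1 - x) / (1 - rPar)) := by
  have h0 := rPar_pos'; have hl := rPar_lt'
  unfold rhoInf
  rw [if_neg (by push_neg; constructor <;> linarith),
    if_neg (by push_neg; linarith)]
  rcases le_or_gt x rPar with h | h
  · have hx : x = rPar := le_antisymm h h1
    rw [if_pos h, hx]
    have : (0:ℝ) < 1 - rPar := by linarith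
    field_simp
  · rw [if_neg (not_le.mpr h)]

lemma rho_nonneg' (x : ℝ) : 0 ≤ rhoInf x := by
  have h1 := sqrt2_gt'; have h2 := sqrt2_lt'
  unfold rhoInf rPar
  split_ifs with ha hb hc
  · exact le_refl 0
  all_goals push_neg at ha
  · have : -1 ≤ x := ha.1
    have e1 : (0:ℝ) ≤ 1 + x := by linarith
    have e2 : (0:ℝ) < 1 + (3 - 2*Real.sqrt 2) := by nlinarith
    have e3 : (0:ℝ) < 1 - (3 - 2*Real.sqrt 2) := by nlinarith
    positivity
  · have e2 : (0:ℝ) < 1 + (3 - 2*Real.sqrt 2) := by nlinarith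
    positivity
  · have e1 : (0:ℝ) ≤ 1 - x := by linarith [ha.2]
    have e2 : (0:ℝ) < 1 + (3 - 2*Real.sqrt 2) := by nlinarith
    have e3 : (0:ℝ) < 1 - (3 - 2*Real.sqrt 2) := by nlinarith
    positivity

lemma measurable_rhoInf' : Measurable rhoInf := by
  unfold rhoInf
  refine Measurable.ite ?_ measurable_const (Measurable.ite ?_ (by fun_prop)
    (Measurable.ite ?_ measurable_const (by fun_prop)))
  · exact (measurableSet_lt measurable_id measurable_const).union
      (measurableSet_lt measurable_const measurable_id)
  · exact measurableSet_le measurable_id measurable_const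
  · exact measurableSet_le measurable_id measurable_const

lemma rPar_eq' : rPar = 3 - 2 * Real.sqrt 2 := rfl

set_option maxHeartbeats 1000000 in
lemma rho_key (x : ℝ) :
    1/2 * (Real.sqrt 2 * rhoInf (Real.sqrt 2 * x - (Real.sqrt 2 - 1)))
      + 1/2 * (Real.sqrt 2 * rhoInf (Real.sqrt 2 * x + (Real.sqrt 2 - 1))) = rhoInf x := by
  have rho_zero : ∀ {x : ℝ}, x ≤ -1 ∨ 1 ≤ x → rhoInf x = 0 := fun h => rho_zero' h
  have rho_left : ∀ {x : ℝ}, -1 ≤ x → x ≤ -(3 - 2*Real.sqrt 2) →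
      rhoInf x = 1 / (1 + (3 - 2*Real.sqrt 2)) * ((1 + x) / (1 - (3 - 2*Real.sqrt 2))) :=
    fun h1 h2 => rho_left' h1 (by rw [rPar_eq']; exact h2)
  have rho_mid : ∀ {x : ℝ}, -(3 - 2*Real.sqrt 2) ≤ x → x ≤ (3 - 2*Real.sqrt 2) →
      rhoInf x = 1 / (1 + (3 - 2*Real.sqrt 2)) :=
    fun h1 h2 => rho_mid' (by rw [rPar_eq']; exact h1) (by rw [rPar_eq']; exact h2)
  have rho_right : ∀ {x : ℝ}, (3 - 2*Real.sqrt 2) ≤ x → x ≤ 1 →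
      rhoInf x = 1 / (1 + (3 - 2*Real.sqrt 2)) * ((1 - x) / (1 - (3 - 2*Real.sqrt 2))) :=
    fun h1 h2 => rho_right' (by rw [rPar_eq']; exact h1) h2
  set s := Real.sqrt 2 with hsdef
  have hs : s^2 = 2 := Real.sq_sqrt (by norm_num)
  have hg : 1.414 < s := by nlinarith [Real.sqrt_nonneg 2]
  have hl : s < 1.415 := by nlinarith [Real.sqrt_nonneg 2]
  have hs0 : (0:ℝ) ≤ s := by linarith
  have hd1 : (0:ℝ) < 1 + (3 - 2*s) := by linarith
  have hd2 : (0:ℝ) < 1 - (3 - 2*s) := by linarith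
  rcases le_or_gt x (-1) with h1 | h1
  · have ha : s*x ≤ -s := by nlinarith [mul_nonneg hs0 (show (0:ℝ) ≤ -1 - x by linarith)]
    rw [rho_zero (Or.inl h1), rho_zero (Or.inl (by linarith : s*x - (s-1) ≤ -1)),
      rho_zero (Or.inl (by linarith : s*x + (s-1) ≤ -1))]
    ring
  rcases le_or_gt x (1-s) with h2 | h2
  · have ha : s*x ≤ s - 2 := by nlinarith [mul_nonneg hs0 (show (0:ℝ) ≤ (1-s) - x by linarith)]
    have hb : -s ≤ s*x := by nlinarith [mul_nonneg hs0 (show (0:ℝ) ≤ x - (-1) by linarith)]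
    rw [rho_zero (Or.inl (by linarith : s*x - (s-1) ≤ -1)),
      rho_left (by linarith : (-1:ℝ) ≤ x) (by linarith),
      rho_left (by linarith : (-1:ℝ) ≤ s*x + (s-1)) (by linarith)]
    field_simp
    linear_combination (1+x) * hs
  rcases le_or_gt x (-(3-2*s)) with h3 | h3
  · have ha : s*x ≤ 4 - 3*s := by
      nlinarith [mul_nonneg hs0 (show (0:ℝ) ≤ -(3-2*s) - x by linarith)]
    have hb : s - 2 ≤ s*x := by nlinarith [mul_nonneg hs0 (show (0:ℝ) ≤ x - (1-s) by linarith)]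
    rw [rho_left (by linarith : (-1:ℝ) ≤ s*x - (s-1)) (by linarith),
      rho_mid (by linarith : -(3-2*s) ≤ s*x + (s-1)) (by linarith),
      rho_left (by linarith : (-1:ℝ) ≤ x) h3]
    field_simp
    linear_combination (1+x) * hs
  rcases le_or_gt x (3-2*s) with h4 | h4
  · have ha : s*x ≤ 3*s - 4 := by
      nlinarith [mul_nonneg hs0 (show (0:ℝ) ≤ (3-2*s) - x by linarith)]
    have hb : 4 - 3*s ≤ s*x := by
      nlinarith [mul_nonneg hs0 (show (0:ℝ) ≤ x - (-(3-2*s)) by linarith)]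
    rw [rho_left (by linarith : (-1:ℝ) ≤ s*x - (s-1)) (by linarith),
      rho_right (by linarith : (3-2*s) ≤ s*x + (s-1)) (by linarith),
      rho_mid (by linarith : -(3-2*s) ≤ x) h4]
    field_simp
    linear_combination (-2) * hs
  rcases le_or_gt x (s-1) with h5 | h5
  · have ha : s*x ≤ 2 - s := by nlinarith [mul_nonneg hs0 (show (0:ℝ) ≤ (s-1) - x by linarith)]
    have hb : 3*s - 4 ≤ s*x := by
      nlinarith [mul_nonneg hs0 (show (0:ℝ) ≤ x - (3-2*s) by linarith)]
    rw [rho_mid (by linarith : -(3-2*s) ≤ s*x - (s-1)) (by linarith),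
      rho_right (by linarith : (3-2*s) ≤ s*x + (s-1)) (by linarith),
      rho_right (by linarith : (3-2*s) ≤ x) (by linarith)]
    field_simp
    linear_combination (1-x) * hs
  rcases le_or_gt x 1 with h6 | h6
  · have ha : s*x ≤ s := by nlinarith [mul_nonneg hs0 (show (0:ℝ) ≤ 1 - x by linarith)]
    have hb : 2 - s ≤ s*x := by nlinarith [mul_nonneg hs0 (show (0:ℝ) ≤ x - (s-1) by linarith)]
    rw [rho_right (by linarith : (3-2*s) ≤ s*x - (s-1)) (by linarith),
      rho_zero (Or.inr (by linarith : (1:ℝ) ≤ s*x + (s-1))),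
      rho_right (by linarith : (3-2*s) ≤ x) h6]
    field_simp
    linear_combination (1-x) * hs
  · have hb : s ≤ s*x := by nlinarith [mul_nonneg hs0 (show (0:ℝ) ≤ x - 1 by linarith)]
    rw [rho_zero (Or.inr (by linarith : (1:ℝ) ≤ x)),
      rho_zero (Or.inr (by linarith : (1:ℝ) ≤ s*x - (s-1))),
      rho_zero (Or.inr (by linarith : (1:ℝ) ≤ s*x + (s-1)))]
    ring

lemma integral_rho' : (∫ x, rhoInf x) = 1 := by
  have h0 := rPar_pos'; have hl := rPar_lt'
  have hd1 : (0:ℝ) < 1 + rPar := by linarith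
  have hd2 : (0:ℝ) < 1 - rPar := by linarith
  have hsupp : ∀ x ∉ Set.Ioc (-1:ℝ) 1, rhoInf x = 0 := by
    intro x hx
    simp only [Set.mem_Ioc, not_and_or, not_lt, not_le] at hx
    rcases hx with h | h
    · exact rho_zero' (Or.inl h)
    · exact rho_zero' (Or.inr h.le)
  rw [← setIntegral_eq_integral_of_forall_compl_eq_zero hsupp,
    ← intervalIntegral.integral_of_le (by norm_num : (-1:ℝ) ≤ 1)]
  have e1 : ∫ x in (-1:ℝ)..(-rPar), rhoInf x
      = ∫ x in (-1:ℝ)..(-rPar), (1/(1+rPar)/(1-rPar) + 1/(1+rPar)/(1-rPar) * x) := by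
    apply intervalIntegral.integral_congr
    intro x hx
    rw [Set.uIcc_of_le (by linarith : (-1:ℝ) ≤ -rPar)] at hx
    rw [rho_left' hx.1 hx.2]; field_simp
  have e2 : ∫ x in (-rPar:ℝ)..rPar, rhoInf x = ∫ x in (-rPar:ℝ)..rPar, (1/(1+rPar) : ℝ) := by
    apply intervalIntegral.integral_congr
    intro x hx
    rw [Set.uIcc_of_le (by linarith : (-rPar:ℝ) ≤ rPar)] at hx
    exact rho_mid' hx.1 hx.2
  have e3 : ∫ x in (rPar:ℝ)..1, rhoInf x
      = ∫ x in (rPar:ℝ)..1, (1/(1+rPar)/(1-rPar) - 1/(1+rPar)/(1-rPar) * x) := by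
    apply intervalIntegral.integral_congr
    intro x hx
    rw [Set.uIcc_of_le (by linarith : (rPar:ℝ) ≤ 1)] at hx
    rw [rho_right' hx.1 hx.2]; field_simp
  have i1 : IntervalIntegrable rhoInf volume (-1) (-rPar) := by
    rw [intervalIntegrable_iff]
    refine IntegrableOn.congr_fun
      (Continuous.integrableOn_uIoc (f := fun x => 1/(1+rPar)/(1-rPar) + 1/(1+rPar)/(1-rPar) * x)
        (by fun_prop)) ?_ measurableSet_uIoc
    intro x hx
    rw [Set.uIoc_of_le (by linarith : (-1:ℝ) ≤ -rPar)] at hx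
    rw [rho_left' hx.1.le hx.2]; field_simp
  have i2 : IntervalIntegrable rhoInf volume (-rPar) rPar := by
    rw [intervalIntegrable_iff]
    refine IntegrableOn.congr_fun
      (Continuous.integrableOn_uIoc (f := fun _ => 1/(1+rPar)) (by fun_prop)) ?_ measurableSet_uIoc
    intro x hx
    rw [Set.uIoc_of_le (by linarith : (-rPar:ℝ) ≤ rPar)] at hx
    exact (rho_mid' hx.1.le hx.2).symm
  have i3 : IntervalIntegrable rhoInf volume rPar 1 := by
    rw [intervalIntegrable_iff]
    refine IntegrableOn.congr_fun
      (Continuous.integrableOn_uIoc (f := fun x => 1/(1+rPar)/(1-rPar) - 1/(1+rPar)/(1-rPar) * x)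
        (by fun_prop)) ?_ measurableSet_uIoc
    intro x hx
    rw [Set.uIoc_of_le (by linarith : (rPar:ℝ) ≤ 1)] at hx
    rw [rho_right' hx.1.le hx.2]; field_simp
  rw [← intervalIntegral.integral_add_adjacent_intervals (a := (-1:ℝ)) (b := -rPar) (c := 1)
      i1 (i2.trans i3),
    ← intervalIntegral.integral_add_adjacent_intervals (a := (-rPar:ℝ)) (b := rPar) (c := 1) i2 i3,
    e1, e2, e3]
  rw [intervalIntegral.integral_add intervalIntegrable_const
      (by apply Continuous.intervalIntegrable; fun_prop),
    intervalIntegral.integral_sub intervalIntegrable_const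
      (by apply Continuous.intervalIntegrable; fun_prop),
    intervalIntegral.integral_const_mul, intervalIntegral.integral_const_mul]
  simp only [intervalIntegral.integral_const, integral_id, smul_eq_mul]
  field_simp
  ring

lemma prod_smul_right' {α β : Type*} [MeasurableSpace α] [MeasurableSpace β]
    (μ : Measure α) [SFinite μ] (ν : Measure β) [SFinite ν] (c : ENNReal) :
    μ.prod (c • ν) = c • μ.prod ν := by
  ext s hs
  rw [Measure.prod_apply hs, Measure.smul_apply, smul_eq_mul, Measure.prod_apply hs,
    ← lintegral_const_mul c (measurable_measure_prodMk_left hs)]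
  simp [Measure.smul_apply]

lemma map_withDensity_comp' {φ : ℝ → ℝ} (hφ : Measurable φ) {g : ℝ → ENNReal}
    (hg : Measurable g) (μ : Measure ℝ) :
    Measure.map φ (μ.withDensity (g ∘ φ)) = (Measure.map φ μ).withDensity g := by
  ext s hs
  rw [Measure.map_apply hφ hs, withDensity_apply _ (hφ hs), withDensity_apply _ hs,
    Measure.restrict_map hφ hs, lintegral_map hg hφ]
  rfl

lemma map_affine_withDensity' (c d : ℝ) (hc : 0 < c) {f : ℝ → ENNReal} (hf : Measurable f) :
    Measure.map (fun x => c * x + d) (volume.withDensity f) =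
      ENNReal.ofReal c⁻¹ • volume.withDensity (fun y => f (c⁻¹ * (y - d))) := by
  have hT : Measurable fun x : ℝ => c * x + d := by fun_prop
  have hg : Measurable fun y : ℝ => f (c⁻¹ * (y - d)) := hf.comp (by fun_prop)
  have hfe : f = (fun y => f (c⁻¹ * (y - d))) ∘ (fun x => c * x + d) := by
    funext x
    simp only [Function.comp_apply]
    congr 1
    field_simp
    ring
  calc Measure.map (fun x => c * x + d) (volume.withDensity f)
      = (Measure.map (fun x => c * x + d) volume).withDensity
          (fun y => f (c⁻¹ * (y - d))) := by
        conv_lhs => rw [hfe]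
        exact map_withDensity_comp' hT hg volume
    _ = ENNReal.ofReal c⁻¹ • volume.withDensity (fun y => f (c⁻¹ * (y - d))) := by
        have h1 : (fun x : ℝ => c * x + d) = (fun x : ℝ => x + d) ∘ (fun x : ℝ => c * x) := rfl
        rw [h1, ← Measure.map_map (by fun_prop) (by fun_prop),
          Real.map_volume_mul_left hc.ne', Measure.map_smul,
          map_add_right_eq_self volume d, abs_of_pos (inv_pos.mpr hc),
          withDensity_smul_measure]

theorem stmt_17 {Ω : Type*} [MeasurableSpace Ω] (P : Measure Ω) [IsProbabilityMeasure P]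
    (μ : ℝ) (hμ : μ = 1 - 1 / Real.sqrt 2) (hr : rPar = 4 * μ - 1)
    (Z B : Ω → ℝ) (hZmeas : Measurable Z) (hBmeas : Measurable B)
    (hZ : Measure.map Z P = volume.withDensity (fun x => ENNReal.ofReal (rhoInf x)))
    (hB : Measure.map B P = symRadMeasure) (hindep : IndepFun Z B P) :
    (∀ x, 0 ≤ rhoInf x) ∧ (∫ x, rhoInf x) = 1 ∧
      Measure.map (fun ω => (1 - μ) * Z ω + μ * B ω) P
        = volume.withDensity (fun x => ENNReal.ofReal (rhoInf x)) := by
  refine ⟨rho_nonneg', integral_rho', ?_⟩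
  have hs : Real.sqrt 2 ^ 2 = 2 := sqrt2_sq'
  have hg := sqrt2_gt'
  have hl := sqrt2_lt'
  have hsne : Real.sqrt 2 ≠ 0 := by positivity
  have hcval : 1 - μ = (Real.sqrt 2)⁻¹ := by
    rw [hμ]; field_simp; ring
  have hc0 : (0:ℝ) < 1 - μ := by rw [hcval]; positivity
  have hcinv : (1 - μ)⁻¹ = Real.sqrt 2 := by rw [hcval, inv_inv]
  have hμs : Real.sqrt 2 * μ = Real.sqrt 2 - 1 := by
    rw [hμ]; field_simp
  have hf : Measurable (fun x => ENNReal.ofReal (rhoInf x)) :=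
    ENNReal.measurable_ofReal.comp measurable_rhoInf'
  have hT : Measurable (fun p : ℝ × ℝ => (1 - μ) * p.1 + μ * p.2) := by fun_prop
  have hcomp : (fun ω => (1 - μ) * Z ω + μ * B ω)
      = (fun p : ℝ × ℝ => (1 - μ) * p.1 + μ * p.2) ∘ (fun ω => (Z ω, B ω)) := rfl
  rw [hcomp, ← Measure.map_map hT (hZmeas.prodMk hBmeas),
    (indepFun_iff_map_prod_eq_prod_map_map hZmeas.aemeasurable hBmeas.aemeasurable).mp hindep,
    hZ, hB]
  unfold symRadMeasure
  rw [Measure.prod_add, prod_smul_right', prod_smul_right',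
    Measure.map_add _ _ hT, Measure.map_smul, Measure.map_smul,
    Measure.prod_dirac, Measure.prod_dirac,
    Measure.map_map hT (by fun_prop), Measure.map_map hT (by fun_prop)]
  have hfun1 : ((fun p : ℝ × ℝ => (1 - μ) * p.1 + μ * p.2) ∘ (fun x : ℝ => (x, (1:ℝ))))
      = fun x => (1 - μ) * x + μ := by funext x; simp
  have hfun2 : ((fun p : ℝ × ℝ => (1 - μ) * p.1 + μ * p.2) ∘ (fun x : ℝ => (x, (-1:ℝ))))
      = fun x => (1 - μ) * x + (-μ) := by funext x; simp
  have harg1 : ∀ y : ℝ, Real.sqrt 2 * (y - μ) = Real.sqrt 2 * y - (Real.sqrt 2 - 1) := by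
    intro y; linear_combination -hμs
  have harg2 : ∀ y : ℝ, Real.sqrt 2 * (y - -μ) = Real.sqrt 2 * y + (Real.sqrt 2 - 1) := by
    intro y; linear_combination hμs
  have h2 : (2:ENNReal)⁻¹ = ENNReal.ofReal (1/2) := by
    rw [ENNReal.ofReal_div_of_pos (by norm_num)]
    norm_num
  have hg1 : Measurable fun y : ℝ => ENNReal.ofReal (rhoInf ((1-μ)⁻¹ * (y - μ))) :=
    hf.comp (by fun_prop)
  have hm : Measurable ((((2:ENNReal)⁻¹ * ENNReal.ofReal (1-μ)⁻¹)) •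
      fun y : ℝ => ENNReal.ofReal (rhoInf ((1-μ)⁻¹ * (y - μ)))) :=
    hg1.const_smul _
  rw [hfun1, hfun2, map_affine_withDensity' (1 - μ) μ hc0 hf,
    map_affine_withDensity' (1 - μ) (-μ) hc0 hf,
    smul_smul, smul_smul]
  rw [← withDensity_smul' _ _ (by finiteness), ← withDensity_smul' _ _ (by finiteness),
    ← withDensity_add_left hm]
  congr 1
  funext x
  simp only [Pi.add_apply, Pi.smul_apply, smul_eq_mul, hcinv, h2, harg1 x, harg2 x]
  rw [← ENNReal.ofReal_mul (by norm_num : (0:ℝ) ≤ 1/2),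
    ← ENNReal.ofReal_mul (mul_nonneg (by norm_num) (Real.sqrt_nonneg 2)),
    ← ENNReal.ofReal_mul (mul_nonneg (by norm_num) (Real.sqrt_nonneg 2)),
    ← ENNReal.ofReal_add
      (mul_nonneg (mul_nonneg (by norm_num) (Real.sqrt_nonneg 2)) (rho_nonneg' _))
      (mul_nonneg (mul_nonneg (by norm_num) (Real.sqrt_nonneg 2)) (rho_nonneg' _))]
  congr 1
  linear_combination rho_key x
end
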